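/- Let (R, m) be a finite local ring with residue field of cardinality q, and let c₁, ..., c_q be representatives of the residue classes of m. Then Z(R) = ⋂_{i=1}^{q} Z(cᵢ + m), where Z(cᵢ + m) is the ideal of polynomials vanishing on the coset cᵢ + m; moreover each Z(cᵢ + m) is primary with associated prime the maximal ideal (x - cᵢ) + m·R[x] of R[x]. -/

import Mathlib

open Polynomial IsLocalRing

/-- The ideal of polynomials in `R[X]` mapping every element of `S` into the ideal `I`. -/
def zeroFunctionsInto {R : Type*} [CommRing R] (S : Set R) (I : Ideal R) : Ideal R[X] where
  carrier := {f | ∀ s ∈ S, f.eval s ∈ I}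
  add_mem' := fun hf hg s hs => by simpa using I.add_mem (hf s hs) (hg s hs)
  zero_mem' := fun s _ => by simp
  smul_mem' := fun c f hf s hs => by simpa using I.mul_mem_left (c.eval s) (hf s hs)

/-- The ideal of polynomials vanishing on the subset `S`. -/
def zeroFunctions {R : Type*} [CommRing R] (S : Set R) : Ideal R[X] :=
  zeroFunctionsInto S ⊥

lemma mem_zeroFunctionsInto {R : Type*} [CommRing R] {S : Set R} {I : Ideal R} {f : R[X]} :
    f ∈ zeroFunctionsInto S I ↔ ∀ s ∈ S, f.eval s ∈ I := Iff.rfl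

lemma mem_zeroFunctions {R : Type*} [CommRing R] {S : Set R} {f : R[X]} :
    f ∈ zeroFunctions S ↔ ∀ s ∈ S, f.eval s = 0 := by
  simp [zeroFunctions, mem_zeroFunctionsInto]

/-- The ideal `(X - c) + m R[X]` is the kernel of `R[X] → R/m`, `f ↦ f(c) mod m`. -/
lemma span_sup_map_eq_ker {R : Type*} [CommRing R] [IsLocalRing R] (c : R) :
    Ideal.span {X - C c} ⊔ (maximalIdeal R).map (C : R →+* R[X]) =
      RingHom.ker ((residue R).comp (evalRingHom c)) := by
  apply le_antisymm
  · apply sup_le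
    · rw [Ideal.span_le]
      rintro p hp
      simp only [Set.mem_singleton_iff] at hp
      subst hp
      simp only [SetLike.mem_coe, RingHom.mem_ker, RingHom.comp_apply, coe_evalRingHom]
      simp
    · rw [Ideal.map_le_iff_le_comap]
      intro a ha
      simp only [Ideal.mem_comap, RingHom.mem_ker, RingHom.comp_apply, coe_evalRingHom, eval_C]
      exact (residue_eq_zero_iff a).mpr ha
  · intro f hf
    have hfc : f.eval c ∈ maximalIdeal R := by
      have h0 : residue R (f.eval c) = 0 := hf
      exact (residue_eq_zero_iff _).mp h0
    have h1 : f - C (f.eval c) ∈ Ideal.span {X - C c} := by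
      rw [Ideal.mem_span_singleton]
      exact dvd_iff_isRoot.mpr (by simp [IsRoot])
    have h2 : C (f.eval c) ∈ (maximalIdeal R).map (C : R →+* R[X]) :=
      Ideal.mem_map_of_mem _ hfc
    have : f = (f - C (f.eval c)) + C (f.eval c) := by ring
    rw [this]
    exact Ideal.add_mem _ (Ideal.mem_sup_left h1) (Ideal.mem_sup_right h2)

lemma zeroFunctionsInto_mul {R : Type*} [CommRing R] (S : Set R) (I J : Ideal R) :
    zeroFunctionsInto S I * zeroFunctionsInto S J ≤ zeroFunctionsInto S (I * J) :=
  Ideal.mul_le.mpr fun f hf g hg s hs => by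
    rw [mem_zeroFunctionsInto] at hf hg
    simpa [eval_mul] using Ideal.mul_mem_mul (hf s hs) (hg s hs)

theorem statement_3 {R : Type*} [CommRing R] [Finite R] [IsLocalRing R]
    (q : ℕ) (c : Fin q → R) (hc : Function.Bijective (fun i => residue R (c i))) :
    (zeroFunctions (Set.univ : Set R) =
        ⨅ i, zeroFunctions {r : R | r - c i ∈ maximalIdeal R}) ∧
      ∀ i, (zeroFunctions {r : R | r - c i ∈ maximalIdeal R}).IsPrimary ∧
        (zeroFunctions {r : R | r - c i ∈ maximalIdeal R}).radical =
          Ideal.span {X - C (c i)} ⊔ (maximalIdeal R).map (C : R →+* R[X]) := by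
  -- the maximal ideal is nilpotent
  have : IsArtinianRing R := isArtinian_of_finite
  obtain ⟨n, hn⟩ : IsNilpotent (maximalIdeal R) := by
    simpa [IsLocalRing.jacobson_eq_maximalIdeal (⊥ : Ideal R) bot_ne_top]
      using IsArtinianRing.isNilpotent_jacobson_bot (R := R)
  constructor
  · ext f
    simp only [mem_zeroFunctions, Ideal.mem_iInf, Set.mem_univ, Set.mem_setOf_eq]
    constructor
    · intro h i r _
      exact h r trivial
    · intro h r _
      obtain ⟨i, hi⟩ := hc.2 (residue R r)
      exact h i r (by
        have : residue R (r - c i) = 0 := by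
          simp only at hi
          rw [map_sub, hi, sub_self]
        exact (residue_eq_zero_iff _).mp this)
  · intro i
    set S : Set R := {r : R | r - c i ∈ maximalIdeal R} with hS
    set M : Ideal R[X] := Ideal.span {X - C (c i)} ⊔ (maximalIdeal R).map (C : R →+* R[X])
      with hM
    have hker := span_sup_map_eq_ker (c i)
    have hMmax : M.IsMaximal := by
      rw [hM, hker]
      exact RingHom.ker_isMaximal_of_surjective _
        ((Ideal.Quotient.mk_surjective).comp fun r => ⟨C r, eval_C⟩)
    -- M ≤ zeroFunctionsInto S m
    have hM1 : M ≤ zeroFunctionsInto S (maximalIdeal R) := by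
      rw [hM]
      apply sup_le
      · rw [Ideal.span_le]
        rintro p hp
        simp only [Set.mem_singleton_iff] at hp
        subst hp
        intro s hs
        simpa [hS] using hs
      · rw [Ideal.map_le_iff_le_comap]
        intro a ha s _
        simpa using ha
    -- M ^ k ≤ zeroFunctionsInto S (m ^ k)
    have hMpow : ∀ k : ℕ, M ^ k ≤ zeroFunctionsInto S (maximalIdeal R ^ k) := by
      intro k
      induction k with
      | zero => intro f _ s _; simp
      | succ k ih =>
        calc M ^ (k + 1) = M ^ k * M := pow_succ M k
        _ ≤ zeroFunctionsInto S (maximalIdeal R ^ k) * zeroFunctionsInto S (maximalIdeal R) :=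
            Ideal.mul_mono ih hM1
        _ ≤ zeroFunctionsInto S (maximalIdeal R ^ k * maximalIdeal R) :=
            zeroFunctionsInto_mul _ _ _
        _ = zeroFunctionsInto S (maximalIdeal R ^ (k + 1)) := by rw [← pow_succ]
    -- M ^ n ≤ Z(S)
    have hMn : M ^ n ≤ zeroFunctions S := by
      intro f hf
      rw [mem_zeroFunctions]
      intro s hs
      have := hMpow n hf s hs
      rw [hn] at this
      simpa using this
    -- Z(S) ≤ M
    have hZM : zeroFunctions S ≤ M := by
      intro f hf
      rw [mem_zeroFunctions] at hf
      have hfc : f.eval (c i) = 0 := hf (c i) (by simp [hS])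
      rw [hM, hker, RingHom.mem_ker, RingHom.comp_apply, coe_evalRingHom, hfc, map_zero]
    -- radical Z(S) = M
    have hrad : (zeroFunctions S).radical = M := by
      apply le_antisymm
      · calc (zeroFunctions S).radical ≤ M.radical := Ideal.radical_mono hZM
        _ = M := hMmax.isPrime.radical
      · intro f hf
        exact ⟨n, hMn (Ideal.pow_mem_pow hf n)⟩
    refine ⟨?_, hrad⟩
    rw [Ideal.isPrimary_iff]
    constructor
    · intro htop
      rw [htop] at hZM
      exact hMmax.ne_top (top_le_iff.mp hZM)
    · intro x y hxy
      by_cases hy : y ∈ M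
      · right; rw [hrad]; exact hy
      · left
        obtain ⟨z, i', hi', hzi⟩ := hMmax.exists_inv hy
        -- z * y + i' = 1, so y ∣ 1 - i' ∣ ... 1 - i'^n
        have h1 : y ∣ 1 - i' ^ n := by
          have hd : (1 : R[X]) - i' ∣ 1 ^ n - i' ^ n := sub_dvd_pow_sub_pow 1 i' n
          rw [one_pow] at hd
          refine dvd_trans ?_ hd
          exact ⟨z, by linear_combination -hzi⟩
        obtain ⟨t, ht⟩ := h1
        have hin : i' ^ n ∈ zeroFunctions S := hMn (Ideal.pow_mem_pow hi' n)
        have : x = x * i' ^ n + (x * y) * t := by linear_combination x * ht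
        rw [this]
        exact Ideal.add_mem _ (Ideal.mul_mem_left _ _ hin) (Ideal.mul_mem_right _ _ hxy)
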